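/- arXiv:1009.5809 — 4 statements merged into one kernel-verified Lean document; each statement's English description precedes it below -/
import Mathlib

section
/- Let A be a Hermitian operator on ℂⁿ⊗ℂᵐ and let y = Σ_{i=1}^k xᵢ⊗yᵢ ∈ ℂⁿ⊗ℂᵐ satisfy ⟨y, Ay⟩ = 1 and Ay ∉ X⊗Y, where X = span{x₁,…,x_k} and Y = span{y₁,…,y_k}. Then there exist a unit product vector x = u⊗v ∈ ℂⁿ⊗ℂᵐ orthogonal to X⊗Y and a real number s ∈ (0,1) such that, with t = (1−s²)^{1/2}, one has ⟨sx + ty, A(sx + ty)⟩ > 1. -/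
open scoped ComplexOrder Matrix

/-- Tensor product `u ⊗ v` of vectors in `ℂⁿ` and `ℂᵐ`. -/
def vecTensor {n m : ℕ} (u : Fin n → ℂ) (v : Fin m → ℂ) : Fin n × Fin m → ℂ :=
  fun p => u p.1 * v p.2

/-- The subspace `X ⊗ Y` of `ℂⁿ ⊗ ℂᵐ` spanned by product vectors `u ⊗ v`, `u ∈ X`, `v ∈ Y`. -/
noncomputable def tensorSubmodule {n m : ℕ}
    (X : Submodule ℂ (Fin n → ℂ)) (Y : Submodule ℂ (Fin m → ℂ)) :
    Submodule ℂ (Fin n × Fin m → ℂ) :=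
  Submodule.span ℂ {w | ∃ u ∈ X, ∃ v ∈ Y, w = vecTensor u v}

open Matrix

lemma dot_vecTensor {n m : ℕ} (p u : Fin n → ℂ) (q v : Fin m → ℂ) :
    star (vecTensor p q) ⬝ᵥ vecTensor u v = (star p ⬝ᵥ u) * (star q ⬝ᵥ v) := by
  rw [dotProduct, Fintype.sum_prod_type, dotProduct, dotProduct, Finset.sum_mul_sum]
  refine Finset.sum_congr rfl fun a _ => Finset.sum_congr rfl fun b _ => ?_
  simp only [Pi.star_apply, vecTensor, star_mul']
  ring

lemma perp_span {n m : ℕ} {X : Submodule ℂ (Fin n → ℂ)} {Y : Submodule ℂ (Fin m → ℂ)}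
    {u : Fin n → ℂ} {v : Fin m → ℂ}
    (h : (∀ p ∈ X, star p ⬝ᵥ u = 0) ∨ (∀ q ∈ Y, star q ⬝ᵥ v = 0)) :
    ∀ w ∈ tensorSubmodule X Y, star w ⬝ᵥ vecTensor u v = 0 := by
  intro w hw
  induction hw using Submodule.span_induction with
  | mem w hw =>
    obtain ⟨p, hp, q, hq, rfl⟩ := hw
    rw [dot_vecTensor]
    rcases h with h | h
    · rw [h p hp, zero_mul]
    · rw [h q hq, mul_zero]
  | zero => simp
  | add a b _ _ ha hb => rw [star_add, add_dotProduct, ha, hb, add_zero]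
  | smul c a _ ha => rw [star_smul, smul_dotProduct, ha, smul_zero]

lemma mem_of_forall_perp {n : ℕ} (X : Submodule ℂ (Fin n → ℂ)) (c : Fin n → ℂ)
    (h : ∀ u : Fin n → ℂ, (∀ p ∈ X, star p ⬝ᵥ u = 0) → star u ⬝ᵥ c = 0) : c ∈ X := by
  let e : (Fin n → ℂ) ≃ₗ[ℂ] EuclideanSpace ℂ (Fin n) :=
    (WithLp.linearEquiv 2 ℂ (Fin n → ℂ)).symm
  have key : ∀ f g : Fin n → ℂ, (inner ℂ (e f) (e g) : ℂ) = star f ⬝ᵥ g := by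
    intro f g
    simp [PiLp.inner_apply, dotProduct, e, RCLike.inner_apply, WithLp.linearEquiv,
      mul_comm]
  have hc : e c ∈ (X.map (e : (Fin n → ℂ) →ₗ[ℂ] EuclideanSpace ℂ (Fin n)))ᗮᗮ := by
    rw [Submodule.mem_orthogonal]
    intro w hw
    rw [Submodule.mem_orthogonal] at hw
    have h2 := h (e.symm w) ?_
    · have h3 : (inner ℂ (e (e.symm w)) (e c) : ℂ) = 0 := by rw [key]; exact h2
      simpa using h3
    · intro p hp
      have h4 := hw (e p) (Submodule.mem_map_of_mem hp)
      rw [show w = e (e.symm w) by simp, key] at h4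
      exact h4
  rw [Submodule.orthogonal_orthogonal] at hc
  obtain ⟨c', hc', hcc⟩ := Submodule.mem_map.mp hc
  rwa [show c' = c from e.injective hcc] at hc'

lemma linear_apply_eq_sum {m : ℕ} (L : (Fin m → ℂ) →ₗ[ℂ] (Fin m → ℂ)) (f : Fin m → ℂ) :
    L f = ∑ b, f b • L (Pi.single b 1) := by
  conv_lhs => rw [← Finset.univ_sum_single f]
  rw [map_sum]
  refine Finset.sum_congr rfl fun b _ => ?_
  rw [← _root_.map_smul]
  congr 1
  funext j
  simp [Pi.single_apply]

lemma herm_dot {N : Type*} [Fintype N] {A : Matrix N N ℂ} (hA : A.IsHermitian)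
    (w z : N → ℂ) :
    star (star w ⬝ᵥ A.mulVec z) = star z ⬝ᵥ A.mulVec w := by
  rw [← Matrix.star_dotProduct, Matrix.star_mulVec, hA.eq, Matrix.dotProduct_mulVec]

lemma stepA {n m : ℕ} (X : Submodule ℂ (Fin n → ℂ)) (Y : Submodule ℂ (Fin m → ℂ))
    (P : Fin n × Fin m → ℂ)
    (h : ∀ u v, (∀ w ∈ tensorSubmodule X Y, star w ⬝ᵥ vecTensor u v = 0) →
      star (vecTensor u v) ⬝ᵥ P = 0) : P ∈ tensorSubmodule X Y := by
  classical
  -- columns lie in X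
  have hcol : ∀ j, (fun i => P (i, j)) ∈ X := by
    intro j
    apply mem_of_forall_perp
    intro u hu
    have h0 := h u (Pi.single j 1) (perp_span (Or.inl hu))
    rw [← h0, dotProduct, dotProduct, Fintype.sum_prod_type]
    refine Finset.sum_congr rfl fun a _ => ?_
    simp [vecTensor, Pi.single_apply, star_mul', apply_ite, mul_ite, ite_mul,
      Finset.sum_ite_eq]
  have hrow : ∀ i, (fun j => P (i, j)) ∈ Y := by
    intro i
    apply mem_of_forall_perp
    intro v hv
    have h0 := h (Pi.single i 1) v (perp_span (Or.inr hv))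
    rw [← h0, dotProduct, dotProduct, Fintype.sum_prod_type]
    rw [Finset.sum_eq_single i]
    · refine Finset.sum_congr rfl fun b _ => ?_
      simp [vecTensor, star_mul']
    · intro a _ ha
      simp [vecTensor, Pi.single_apply, ha, star_mul']
    · simp
  obtain ⟨Xc, hXc⟩ := Submodule.exists_isCompl X
  obtain ⟨Yc, hYc⟩ := Submodule.exists_isCompl Y
  set Q : (Fin n → ℂ) →ₗ[ℂ] (Fin n → ℂ) :=
    X.subtype ∘ₗ X.projectionOnto Xc hXc with hQ
  set R : (Fin m → ℂ) →ₗ[ℂ] (Fin m → ℂ) :=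
    Y.subtype ∘ₗ Y.projectionOnto Yc hYc with hR
  have hQmem : ∀ w, Q w ∈ X := fun w => (X.projectionOnto Xc hXc w).2
  have hRmem : ∀ w, R w ∈ Y := fun w => (Y.projectionOnto Yc hYc w).2
  have hQfix : ∀ w ∈ X, Q w = w := by
    intro w hw
    have := Submodule.projectionOnto_apply_left hXc ⟨w, hw⟩
    simp only [hQ, LinearMap.comp_apply, Submodule.subtype_apply]
    rw [show w = ((⟨w, hw⟩ : X) : Fin n → ℂ) from rfl, this]
  have hRfix : ∀ w ∈ Y, R w = w := by
    intro w hw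
    have := Submodule.projectionOnto_apply_left hYc ⟨w, hw⟩
    simp only [hR, LinearMap.comp_apply, Submodule.subtype_apply]
    rw [show w = ((⟨w, hw⟩ : Y) : Fin m → ℂ) from rfl, this]
  have key : ∀ p : Fin n × Fin m,
      P p = ∑ a, ∑ b, P (a, b) * (Q (Pi.single a 1) p.1 * R (Pi.single b 1) p.2) := by
    rintro ⟨i, j⟩
    have h1 : ∀ a : Fin n, (∑ b, P (a, b) * R (Pi.single b 1) j) = P (a, j) := by
      intro a
      have h2 : (fun b => P (a, b)) = ∑ b, P (a, b) • R (Pi.single b 1) := by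
        conv_lhs => rw [← hRfix _ (hrow a)]
        exact linear_apply_eq_sum R _
      have h3 := congrFun h2 j
      simpa [Finset.sum_apply] using h3.symm
    calc P (i, j) = Q (fun i' => P (i', j)) i := by rw [hQfix _ (hcol j)]
      _ = (∑ a, P (a, j) • Q (Pi.single a 1)) i := by rw [← linear_apply_eq_sum]
      _ = ∑ a, P (a, j) * Q (Pi.single a 1) i := by simp [Finset.sum_apply]
      _ = ∑ a, ∑ b, P (a, b) * (Q (Pi.single a 1) i * R (Pi.single b 1) j) := by
          refine Finset.sum_congr rfl fun a _ => ?_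
          rw [mul_comm, ← h1 a, Finset.mul_sum]
          exact Finset.sum_congr rfl fun b _ => by ring
  have hPN : P = ∑ a, ∑ b, P (a, b) • vecTensor (Q (Pi.single a 1)) (R (Pi.single b 1)) := by
    funext p
    rw [key p]
    simp [Finset.sum_apply, vecTensor, smul_eq_mul]
  rw [hPN]
  exact Submodule.sum_mem _ fun a _ => Submodule.sum_mem _ fun b _ =>
    Submodule.smul_mem _ _ (Submodule.subset_span ⟨_, hQmem _, _, hRmem _, rfl⟩)

lemma expand_quad {N : Type*} [Fintype N] (A : Matrix N N ℂ) (xf y : N → ℂ)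
    (s t aR dR : ℝ)
    (ha : star xf ⬝ᵥ A.mulVec xf = (aR : ℂ))
    (hd1 : star xf ⬝ᵥ A.mulVec y = (dR : ℂ))
    (hd2 : star y ⬝ᵥ A.mulVec xf = (dR : ℂ))
    (h1 : star y ⬝ᵥ A.mulVec y = 1) :
    star ((s : ℂ) • xf + (t : ℂ) • y) ⬝ᵥ A.mulVec ((s : ℂ) • xf + (t : ℂ) • y)
      = ((s^2 * aR + 2*(s*t)*dR + t^2 : ℝ) : ℂ) := by
  rw [Matrix.mulVec_add, Matrix.mulVec_smul, Matrix.mulVec_smul, star_add, star_smul,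
    star_smul]
  simp only [add_dotProduct, dotProduct_add, smul_dotProduct, dotProduct_smul, smul_eq_mul]
  rw [ha, hd1, hd2, h1]
  simp only [Complex.star_def, Complex.conj_ofReal]
  push_cast
  ring


/-- **Lemma 5** (Størmer): if `A` is Hermitian on `ℂⁿ ⊗ ℂᵐ`, `y = Σ_{i=1}^k xᵢ ⊗ yᵢ`
satisfies `⟨y, Ay⟩ = 1` and `Ay ∉ X ⊗ Y` (with `X = span xᵢ`, `Y = span yᵢ`), then there
are a unit product vector `x = u ⊗ v ⊥ X ⊗ Y` and `s ∈ (0,1)` such that, with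
`t = (1-s²)^{1/2}`, one has `⟨sx + ty, A(sx + ty)⟩ > 1`. -/
theorem exists_product_vector_gt_one {n m k : ℕ}
    (A : Matrix (Fin n × Fin m) (Fin n × Fin m) ℂ) (hA : A.IsHermitian)
    (y : Fin n × Fin m → ℂ) (x : Fin k → Fin n → ℂ) (z : Fin k → Fin m → ℂ)
    (hy : y = ∑ i, vecTensor (x i) (z i))
    (h1 : star y ⬝ᵥ A.mulVec y = 1)
    (hnot : A.mulVec y ∉
      tensorSubmodule (Submodule.span ℂ (Set.range x)) (Submodule.span ℂ (Set.range z))) :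
    ∃ (u : Fin n → ℂ) (v : Fin m → ℂ) (s : ℝ),
      star (vecTensor u v) ⬝ᵥ vecTensor u v = 1 ∧
      (∀ w ∈ tensorSubmodule (Submodule.span ℂ (Set.range x))
          (Submodule.span ℂ (Set.range z)), star w ⬝ᵥ vecTensor u v = 0) ∧
      0 < s ∧ s < 1 ∧
      1 < star ((s : ℂ) • vecTensor u v + (Real.sqrt (1 - s ^ 2) : ℂ) • y) ⬝ᵥ
            A.mulVec ((s : ℂ) • vecTensor u v + (Real.sqrt (1 - s ^ 2) : ℂ) • y) := by
  classical
  by_cases hex : ∃ u v,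
      (∀ w ∈ tensorSubmodule (Submodule.span ℂ (Set.range x))
        (Submodule.span ℂ (Set.range z)), star w ⬝ᵥ vecTensor u v = 0) ∧
      star (vecTensor u v) ⬝ᵥ A.mulVec y ≠ 0
  swap
  · exfalso
    apply hnot
    push_neg at hex
    exact stepA _ _ _ fun u v h => hex u v h
  obtain ⟨u, v, hperp, hcne⟩ := hex
  set x0 := vecTensor u v with hx0def
  set c := star x0 ⬝ᵥ A.mulVec y with hcdef
  have hx0ne : x0 ≠ 0 := by
    intro h
    apply hcne
    rw [hcdef, h]
    simp
  set nn := ∑ p, Complex.normSq (x0 p) with hnndef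
  have hx0dot : star x0 ⬝ᵥ x0 = ((nn : ℝ) : ℂ) := by
    rw [hnndef]
    push_cast
    simp [dotProduct, Complex.normSq_eq_conj_mul_self, Complex.star_def]
  have hnn0 : 0 ≤ nn := Finset.sum_nonneg fun p _ => Complex.normSq_nonneg _
  have hnn : 0 < nn := by
    rcases hnn0.lt_or_eq with h | h
    · exact h
    · exfalso
      apply hx0ne
      funext p
      have h5 := (Finset.sum_eq_zero_iff_of_nonneg
        (fun p _ => Complex.normSq_nonneg (x0 p))).mp h.symm p (Finset.mem_univ p)
      simpa using Complex.normSq_eq_zero.mp h5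
  set r := Real.sqrt nn with hrdef
  have hr : 0 < r := Real.sqrt_pos.mpr hnn
  have hr2 : r ^ 2 = nn := Real.sq_sqrt hnn0
  set ac := ‖c‖ with hacdef
  have hac : 0 < ac := norm_pos_iff.mpr hcne
  set γ : ℂ := c / ((ac * r : ℝ) : ℂ) with hγdef
  have htv : vecTensor (γ • u) v = γ • x0 := by
    funext p
    simp [vecTensor, hx0def, mul_assoc]
  set dR := ac / r with hdRdef
  have hdR : 0 < dR := div_pos hac hr
  have hgc : (starRingEnd ℂ) γ * c = (dR : ℂ) := by
    calc (starRingEnd ℂ) γ * c = (c * (starRingEnd ℂ) c) / ((ac * r : ℝ) : ℂ) := by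
          rw [hγdef, map_div₀, Complex.conj_ofReal]; ring
      _ = ((Complex.normSq c : ℝ) : ℂ) / ((ac * r : ℝ) : ℂ) := by rw [Complex.mul_conj]
      _ = ((dR : ℝ) : ℂ) := by
          rw [← Complex.ofReal_div]
          congr 1
          rw [← Complex.sq_norm, ← hacdef, hdRdef]
          field_simp
  set xf := γ • x0 with hxfdef
  have hunit : star xf ⬝ᵥ xf = 1 := by
    rw [hxfdef, star_smul, smul_dotProduct, dotProduct_smul, hx0dot, smul_eq_mul,
      smul_eq_mul, ← mul_assoc, mul_comm (star γ) γ, Complex.star_def, Complex.mul_conj]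
    rw [← Complex.ofReal_mul]
    have h9 : Complex.normSq γ * nn = 1 := by
      rw [hγdef, Complex.normSq_div, Complex.normSq_ofReal, ← Complex.sq_norm, ← hacdef,
        ← hr2]
      field_simp
    rw [h9, Complex.ofReal_one]
  have horth : ∀ w ∈ tensorSubmodule (Submodule.span ℂ (Set.range x))
      (Submodule.span ℂ (Set.range z)), star w ⬝ᵥ xf = 0 := by
    intro w hw
    rw [hxfdef, dotProduct_smul, hperp w hw, smul_zero]
  have hdfin : star xf ⬝ᵥ A.mulVec y = (dR : ℂ) := by
    rw [hxfdef, star_smul, smul_dotProduct, smul_eq_mul, Complex.star_def, ← hcdef, hgc]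
  have hyAx : star y ⬝ᵥ A.mulVec xf = (dR : ℂ) := by
    rw [← herm_dot hA xf y, hdfin, Complex.star_def, Complex.conj_ofReal]
  set aC := star xf ⬝ᵥ A.mulVec xf with haCdef
  set aR := aC.re with haRdef
  have haself : aC = ((aR : ℝ) : ℂ) := by
    have h10 : (starRingEnd ℂ) aC = aC := by
      have := herm_dot hA xf xf
      rw [Complex.star_def] at this
      rw [this, haCdef]
    exact (Complex.conj_eq_iff_re.mp h10).symm
  -- choose s
  have habs : (0:ℝ) ≤ |aR - 1| := abs_nonneg _
  set s := (1/2) * min (1/2) (dR / (1 + |aR - 1|)) with hsdef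
  have hs0 : 0 < s := by
    apply mul_pos (by norm_num)
    apply lt_min (by norm_num)
    positivity
  have hs14 : s ≤ 1/4 := by
    calc s ≤ (1/2) * (1/2) :=
          mul_le_mul_of_nonneg_left (min_le_left _ _) (by norm_num)
      _ = 1/4 := by norm_num
  have hs1 : s < 1 := by linarith
  set t := Real.sqrt (1 - s ^ 2) with htdef
  have ht2 : t ^ 2 = 1 - s ^ 2 := Real.sq_sqrt (by nlinarith)
  have ht12 : 1/2 ≤ t := by
    rw [htdef]
    rw [show (1:ℝ)/2 = Real.sqrt ((1/2)^2) from (Real.sqrt_sq (by norm_num)).symm]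
    apply Real.sqrt_le_sqrt
    nlinarith
  have ht0 : 0 ≤ t := Real.sqrt_nonneg _
  have hst : s * |aR - 1| ≤ dR / 2 := by
    have h7 : s ≤ (1/2) * (dR / (1 + |aR - 1|)) :=
      mul_le_mul_of_nonneg_left (min_le_right _ _) (by norm_num)
    have hpos : (0:ℝ) < 1 + |aR - 1| := by linarith
    have h8 : s * (1 + |aR - 1|) ≤ dR / 2 := by
      calc s * (1 + |aR - 1|) ≤ ((1/2) * (dR / (1 + |aR - 1|))) * (1 + |aR - 1|) :=
            mul_le_mul_of_nonneg_right h7 hpos.le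
        _ = dR / 2 := by field_simp
    nlinarith
  refine ⟨γ • u, v, s, ?_, ?_, hs0, hs1, ?_⟩
  · rw [htv]
    exact hunit
  · intro w hw
    rw [htv]
    exact horth w hw
  · rw [htv, ← htdef]
    have hexp := expand_quad A xf y s t aR dR (by rw [← haCdef, haself]) hdfin hyAx h1
    rw [hexp]
    clear_value x0 c nn r ac γ dR xf aC aR s t
    have h11 : -(|aR - 1|) ≤ aR - 1 := neg_abs_le _
    have hreal : (1:ℝ) < s^2 * aR + 2*(s*t)*dR + t^2 := by
      nlinarith [mul_le_mul_of_nonneg_left hst hs0.le,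
        mul_le_mul_of_nonneg_right ht12 (mul_nonneg hs0.le hdR.le), ht2]
    have h12 := Complex.real_lt_real.mpr hreal
    rwa [Complex.ofReal_one] at h12
end

section
/- The Choi map φ : M₃(ℂ) → M₃(ℂ), defined by φ((x_{ij})) = [[x₁₁ + x₃₃, −x₁₂, −x₁₃], [−x₂₁, x₁₁ + x₂₂, −x₂₃], [−x₃₁, −x₃₂, x₂₂ + x₃₃]], is a positive map, i.e., φ(x) is positive semidefinite whenever x ∈ M₃(ℂ) is positive semidefinite. -/
open scoped ComplexOrder Matrix

/-- The Choi map `φ` on `M₃(ℂ)`, sending `(x_{ij})` to the matrix with diagonal entries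
`x₁₁+x₃₃, x₁₁+x₂₂, x₂₂+x₃₃` and off-diagonal entries `-x_{ij}`. -/
def choiMap : Matrix (Fin 3) (Fin 3) ℂ →ₗ[ℂ] Matrix (Fin 3) (Fin 3) ℂ where
  toFun x :=
    !![x 0 0 + x 2 2, -x 0 1, -x 0 2;
       -x 1 0, x 0 0 + x 1 1, -x 1 2;
       -x 2 0, -x 2 1, x 1 1 + x 2 2]
  map_add' x y := by
    ext i j
    fin_cases i <;> fin_cases j <;>
      simp [Matrix.add_apply] <;> ring
  map_smul' c x := by
    ext i j
    fin_cases i <;> fin_cases j <;>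
      simp [Matrix.smul_apply] <;> ring

private lemma choi_real_ineq (p0 p1 p2 q0 q1 q2 : ℝ) :
    2*(p0*p1*q0*q1+p0*p2*q0*q2+p1*p2*q1*q2) ≤
      p0^2*(q0^2+q2^2)+p1^2*(q0^2+q1^2)+p2^2*(q1^2+q2^2) := by
  have main : ∀ p0 p1 p2 q0 q1 q2 : ℝ,
      0 < q0^4+q0^2*q2^2+q1^2*q2^2 → 0 < q0^2+q2^2 →
      2*(p0*p1*q0*q1+p0*p2*q0*q2+p1*p2*q1*q2) ≤
        p0^2*(q0^2+q2^2)+p1^2*(q0^2+q1^2)+p2^2*(q1^2+q2^2) := by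
    intro p0 p1 p2 q0 q1 q2 hA hD
    nlinarith [mul_nonneg hA.le (sq_nonneg ((q0^2+q2^2)*p0 - q0*q1*p1 - q0*q2*p2)),
      sq_nonneg ((q0^4+q0^2*q2^2+q1^2*q2^2)*p1 - q1*q2*(2*q0^2+q2^2)*p2),
      sq_nonneg (q0*q1*(q0^2-q2^2)*p2), sq_nonneg (q2^2*(q0^2-q1^2)*p2),
      sq_nonneg (q0*q2*(q1^2-q2^2)*p2), mul_pos hA hD]
  rcases eq_or_ne q0 0 with h0 | h0
  · rcases eq_or_ne q1 0 with h1 | h1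
    · subst h0; subst h1; nlinarith [sq_nonneg (p0*q2), sq_nonneg (p2*q2)]
    · rcases eq_or_ne q2 0 with h2 | h2
      · subst h0; subst h2; nlinarith [sq_nonneg (p1*q1), sq_nonneg (p2*q1)]
      · exact main _ _ _ _ _ _ (by subst h0; positivity) (by subst h0; positivity)
  · exact main _ _ _ _ _ _ (by positivity) (by positivity)

private lemma diag_nonneg' {x : Matrix (Fin 3) (Fin 3) ℂ} (hx : x.PosSemidef) (i : Fin 3) :
    0 ≤ (x i i).re := by
  have h := hx.dotProduct_mulVec_nonneg (Pi.single i 1)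
  have h2 : dotProduct (star (Pi.single i 1)) (x *ᵥ Pi.single i 1) = x i i := by
    simp [dotProduct, Matrix.mulVec, Pi.single_apply, Finset.sum_ite_eq]
  rw [h2] at h
  exact (Complex.le_def.mp h).1

private lemma sq_le_of_quad (a b n : ℝ) (ha : 0 ≤ a) (hb : 0 ≤ b) (hn : 0 ≤ n)
    (h : ∀ t : ℝ, 0 ≤ b * (t*t) + (2*n) * t + n*a) : n ≤ a * b := by
  have hq : ∀ t : ℝ, 0 ≤ b * (t*t) + (2*n) * t + n*a := h
  have hd := discrim_le_zero hq
  rw [discrim] at hd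
  rcases hn.eq_or_lt with h0 | h0
  · rw [← h0]; exact mul_nonneg ha hb
  · nlinarith [hd]

private lemma entry_bound01 {x : Matrix (Fin 3) (Fin 3) ℂ} (hx : x.PosSemidef)
    (ha : 0 ≤ (x 0 0).re) (hb : 0 ≤ (x 1 1).re) :
    Complex.normSq (x 0 1) ≤ (x 0 0).re * (x 1 1).re := by
  refine sq_le_of_quad _ _ _ ha hb (Complex.normSq_nonneg _) fun t => ?_
  have h := hx.dotProduct_mulVec_nonneg ![x 0 1, (t:ℂ), 0]
  have h10 : x 1 0 = starRingEnd ℂ (x 0 1) := by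
    simpa [Matrix.conjTranspose_apply] using (hx.1.apply 1 0).symm
  have hre := (Complex.le_def.mp h).1
  simp only [dotProduct, Matrix.mulVec, Fin.sum_univ_three, Fin.isValue,
    Matrix.cons_val_zero, Matrix.cons_val_one, Matrix.head_cons,
    Matrix.cons_val_two, Matrix.tail_cons, Pi.star_apply] at hre
  norm_num [h10, Complex.add_re, Complex.mul_re, Complex.normSq_apply] at hre ⊢
  nlinarith [hre]

private lemma entry_bound02 {x : Matrix (Fin 3) (Fin 3) ℂ} (hx : x.PosSemidef)
    (ha : 0 ≤ (x 0 0).re) (hb : 0 ≤ (x 2 2).re) :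
    Complex.normSq (x 0 2) ≤ (x 0 0).re * (x 2 2).re := by
  refine sq_le_of_quad _ _ _ ha hb (Complex.normSq_nonneg _) fun t => ?_
  have h := hx.dotProduct_mulVec_nonneg ![x 0 2, 0, (t:ℂ)]
  have h20 : x 2 0 = starRingEnd ℂ (x 0 2) := by
    simpa [Matrix.conjTranspose_apply] using (hx.1.apply 2 0).symm
  have hre := (Complex.le_def.mp h).1
  simp only [dotProduct, Matrix.mulVec, Fin.sum_univ_three, Fin.isValue,
    Matrix.cons_val_zero, Matrix.cons_val_one, Matrix.head_cons,
    Matrix.cons_val_two, Matrix.tail_cons, Pi.star_apply] at hre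
  norm_num [h20, Complex.add_re, Complex.mul_re, Complex.normSq_apply] at hre ⊢
  nlinarith [hre]

private lemma entry_bound12 {x : Matrix (Fin 3) (Fin 3) ℂ} (hx : x.PosSemidef)
    (ha : 0 ≤ (x 1 1).re) (hb : 0 ≤ (x 2 2).re) :
    Complex.normSq (x 1 2) ≤ (x 1 1).re * (x 2 2).re := by
  refine sq_le_of_quad _ _ _ ha hb (Complex.normSq_nonneg _) fun t => ?_
  have h := hx.dotProduct_mulVec_nonneg ![0, x 1 2, (t:ℂ)]
  have h21 : x 2 1 = starRingEnd ℂ (x 1 2) := by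
    simpa [Matrix.conjTranspose_apply] using (hx.1.apply 2 1).symm
  have hre := (Complex.le_def.mp h).1
  simp only [dotProduct, Matrix.mulVec, Fin.sum_univ_three, Fin.isValue,
    Matrix.cons_val_zero, Matrix.cons_val_one, Matrix.head_cons,
    Matrix.cons_val_two, Matrix.tail_cons, Pi.star_apply] at hre
  norm_num [h21, Complex.add_re, Complex.mul_re, Complex.normSq_apply] at hre ⊢
  nlinarith [hre]

private lemma choiMap_isHermitian (x : Matrix (Fin 3) (Fin 3) ℂ) (hx : x.PosSemidef) :
    (choiMap x).IsHermitian := by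
  have h10 : x 1 0 = starRingEnd ℂ (x 0 1) := by
    simpa [Matrix.conjTranspose_apply] using (hx.1.apply 1 0).symm
  have h20 : x 2 0 = starRingEnd ℂ (x 0 2) := by
    simpa [Matrix.conjTranspose_apply] using (hx.1.apply 2 0).symm
  have h21 : x 2 1 = starRingEnd ℂ (x 1 2) := by
    simpa [Matrix.conjTranspose_apply] using (hx.1.apply 2 1).symm
  obtain ⟨r0, hd0⟩ := Complex.conj_eq_iff_real.mp
    (by simpa [Matrix.conjTranspose_apply] using hx.1.apply 0 0)
  obtain ⟨r1, hd1⟩ := Complex.conj_eq_iff_real.mp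
    (by simpa [Matrix.conjTranspose_apply] using hx.1.apply 1 1)
  obtain ⟨r2, hd2⟩ := Complex.conj_eq_iff_real.mp
    (by simpa [Matrix.conjTranspose_apply] using hx.1.apply 2 2)
  ext i j
  rw [Matrix.conjTranspose_apply]
  fin_cases i <;> fin_cases j <;>
    simp [choiMap, h10, h20, h21, hd0, hd1, hd2]

private lemma choiMap_qf (x : Matrix (Fin 3) (Fin 3) ℂ) (hx : x.PosSemidef) (hH : (choiMap x).IsHermitian)
    (v : Fin 3 → ℂ)
    (ha0 : 0 ≤ (x 0 0).re) (ha1 : 0 ≤ (x 1 1).re) (ha2 : 0 ≤ (x 2 2).re)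
    (hb01 : Complex.normSq (x 0 1) ≤ (x 0 0).re * (x 1 1).re)
    (hb02 : Complex.normSq (x 0 2) ≤ (x 0 0).re * (x 2 2).re)
    (hb12 : Complex.normSq (x 1 2) ≤ (x 1 1).re * (x 2 2).re) :
    0 ≤ dotProduct (star v) (choiMap x *ᵥ v) := by
  have h10 : x 1 0 = starRingEnd ℂ (x 0 1) := by
    simpa [Matrix.conjTranspose_apply] using (hx.1.apply 1 0).symm
  have h20 : x 2 0 = starRingEnd ℂ (x 0 2) := by
    simpa [Matrix.conjTranspose_apply] using (hx.1.apply 2 0).symm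
  have h21 : x 2 1 = starRingEnd ℂ (x 1 2) := by
    simpa [Matrix.conjTranspose_apply] using (hx.1.apply 2 1).symm
  have hd0 : x 0 0 = ((x 0 0).re : ℂ) :=
    (Complex.conj_eq_iff_re.mp (by simpa [Matrix.conjTranspose_apply] using hx.1.apply 0 0)).symm
  have hd1 : x 1 1 = ((x 1 1).re : ℂ) :=
    (Complex.conj_eq_iff_re.mp (by simpa [Matrix.conjTranspose_apply] using hx.1.apply 1 1)).symm
  have hd2 : x 2 2 = ((x 2 2).re : ℂ) :=
    (Complex.conj_eq_iff_re.mp (by simpa [Matrix.conjTranspose_apply] using hx.1.apply 2 2)).symm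
  -- imaginary part vanishes
  have hzstar : dotProduct (star v) (choiMap x *ᵥ v)
      = star (dotProduct (star v) (choiMap x *ᵥ v)) := by
    conv_lhs => rw [Matrix.star_dotProduct, Matrix.star_mulVec,
      ← Matrix.dotProduct_mulVec, hH.eq]
  have him : (dotProduct (star v) (choiMap x *ᵥ v)).im = 0 := by
    have := congrArg Complex.im hzstar
    simp only [Complex.star_def, Complex.conj_im] at this
    linarith
  rw [Complex.le_def]
  refine ⟨?_, by simpa using him.symm⟩
  -- real part
  set q0 := Real.sqrt (x 0 0).re with hq0def
  set q1 := Real.sqrt (x 1 1).re with hq1def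
  set q2 := Real.sqrt (x 2 2).re with hq2def
  have hq0 : q0^2 = (x 0 0).re := Real.sq_sqrt ha0
  have hq1 : q1^2 = (x 1 1).re := Real.sq_sqrt ha1
  have hq2 : q2^2 = (x 2 2).re := Real.sq_sqrt ha2
  have hq0n : 0 ≤ q0 := Real.sqrt_nonneg _
  have hq1n : 0 ≤ q1 := Real.sqrt_nonneg _
  have hq2n : 0 ≤ q2 := Real.sqrt_nonneg _
  set P0 := ‖v 0‖ with hP0def
  set P1 := ‖v 1‖ with hP1def
  set P2 := ‖v 2‖ with hP2def
  have hM01 : ‖x 0 1‖ ≤ q0 * q1 := by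
    rw [Complex.norm_def, hq0def, hq1def, ← Real.sqrt_mul ha0]
    exact Real.sqrt_le_sqrt hb01
  have hM02 : ‖x 0 2‖ ≤ q0 * q2 := by
    rw [Complex.norm_def, hq0def, hq2def, ← Real.sqrt_mul ha0]
    exact Real.sqrt_le_sqrt hb02
  have hM12 : ‖x 1 2‖ ≤ q1 * q2 := by
    rw [Complex.norm_def, hq1def, hq2def, ← Real.sqrt_mul ha1]
    exact Real.sqrt_le_sqrt hb12
  have ht01 : ((starRingEnd ℂ) (v 0) * x 0 1 * v 1).re ≤ P0 * P1 * (q0 * q1) := by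
    have h1 : ‖(starRingEnd ℂ) (v 0) * x 0 1 * v 1‖
        = P0 * ‖x 0 1‖ * P1 := by
      simp [map_mul, Complex.norm_conj, hP0def, hP1def]
    have h2 : |((starRingEnd ℂ) (v 0) * x 0 1 * v 1).re| ≤ P0 * ‖x 0 1‖ * P1 := by
      rw [← h1]; exact Complex.abs_re_le_norm _
    have h3 := le_abs_self (((starRingEnd ℂ) (v 0) * x 0 1 * v 1).re)
    have h4 : P0 * ‖x 0 1‖ * P1 ≤ P0 * (q0 * q1) * P1 :=
      mul_le_mul_of_nonneg_right (mul_le_mul_of_nonneg_left hM01 (norm_nonneg (v 0)))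
        (norm_nonneg (v 1))
    linarith [h2, h3, h4]
  have ht02 : ((starRingEnd ℂ) (v 0) * x 0 2 * v 2).re ≤ P0 * P2 * (q0 * q2) := by
    have h1 : ‖(starRingEnd ℂ) (v 0) * x 0 2 * v 2‖
        = P0 * ‖x 0 2‖ * P2 := by
      simp [map_mul, Complex.norm_conj, hP0def, hP2def]
    have h2 : |((starRingEnd ℂ) (v 0) * x 0 2 * v 2).re| ≤ P0 * ‖x 0 2‖ * P2 := by
      rw [← h1]; exact Complex.abs_re_le_norm _
    have h3 := le_abs_self (((starRingEnd ℂ) (v 0) * x 0 2 * v 2).re)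
    have h4 : P0 * ‖x 0 2‖ * P2 ≤ P0 * (q0 * q2) * P2 :=
      mul_le_mul_of_nonneg_right (mul_le_mul_of_nonneg_left hM02 (norm_nonneg (v 0)))
        (norm_nonneg (v 2))
    linarith [h2, h3, h4]
  have ht12 : ((starRingEnd ℂ) (v 1) * x 1 2 * v 2).re ≤ P1 * P2 * (q1 * q2) := by
    have h1 : ‖(starRingEnd ℂ) (v 1) * x 1 2 * v 2‖
        = P1 * ‖x 1 2‖ * P2 := by
      simp [map_mul, Complex.norm_conj, hP1def, hP2def]
    have h2 : |((starRingEnd ℂ) (v 1) * x 1 2 * v 2).re| ≤ P1 * ‖x 1 2‖ * P2 := by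
      rw [← h1]; exact Complex.abs_re_le_norm _
    have h3 := le_abs_self (((starRingEnd ℂ) (v 1) * x 1 2 * v 2).re)
    have h4 : P1 * ‖x 1 2‖ * P2 ≤ P1 * (q1 * q2) * P2 :=
      mul_le_mul_of_nonneg_right (mul_le_mul_of_nonneg_left hM12 (norm_nonneg (v 1)))
        (norm_nonneg (v 2))
    linarith [h2, h3, h4]
  have hP0sq : P0^2 = (v 0).re^2 + (v 0).im^2 := by
    rw [hP0def, Complex.sq_norm, Complex.normSq_apply] ; ring
  have hP1sq : P1^2 = (v 1).re^2 + (v 1).im^2 := by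
    rw [hP1def, Complex.sq_norm, Complex.normSq_apply] ; ring
  have hP2sq : P2^2 = (v 2).re^2 + (v 2).im^2 := by
    rw [hP2def, Complex.sq_norm, Complex.normSq_apply] ; ring
  have key : (dotProduct (star v) (choiMap x *ᵥ v)).re =
      (q0^2 + q2^2) * P0^2 + (q0^2 + q1^2) * P1^2 + (q1^2 + q2^2) * P2^2
        - 2 * ((starRingEnd ℂ) (v 0) * x 0 1 * v 1).re
        - 2 * ((starRingEnd ℂ) (v 0) * x 0 2 * v 2).re
        - 2 * ((starRingEnd ℂ) (v 1) * x 1 2 * v 2).re := by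
    rw [hq0, hq1, hq2, hP0sq, hP1sq, hP2sq]
    simp only [dotProduct, Matrix.mulVec, Fin.sum_univ_three, Pi.star_apply, choiMap,
      LinearMap.coe_mk, AddHom.coe_mk, Matrix.cons_val', Matrix.cons_val_zero,
      Matrix.cons_val_one, Matrix.head_cons, Matrix.empty_val', Matrix.cons_val_fin_one,
      Matrix.head_fin_const, Matrix.cons_val_two, Matrix.tail_cons, Matrix.of_apply,
      h10, h20, h21]
    rw [hd0, hd1, hd2]
    simp [Complex.add_re, Complex.mul_re, Complex.add_im, Complex.mul_im, Complex.star_def,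
      Complex.conj_re, Complex.conj_im]
    ring
  rw [key]
  have hchoi : 2*(P0*P1*(q0*q1) + P0*P2*(q0*q2) + P1*P2*(q1*q2)) ≤
      P0^2*(q0^2+q2^2) + P1^2*(q0^2+q1^2) + P2^2*(q1^2+q2^2) := by
    have := choi_real_ineq P0 P1 P2 q0 q1 q2
    linarith
  simp only [Complex.zero_re]
  linarith [ht01, ht02, ht12, hchoi]

/-- The Choi map is a positive map: it sends positive semidefinite matrices to
positive semidefinite matrices. -/
theorem choiMap_isPositiveMap :
    ∀ x : Matrix (Fin 3) (Fin 3) ℂ, x.PosSemidef → (choiMap x).PosSemidef := by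
  intro x hx
  have ha0 : 0 ≤ (x 0 0).re := diag_nonneg' hx 0
  have ha1 : 0 ≤ (x 1 1).re := diag_nonneg' hx 1
  have ha2 : 0 ≤ (x 2 2).re := diag_nonneg' hx 2
  have hH := choiMap_isHermitian x hx
  exact .of_dotProduct_mulVec_nonneg hH (fun v => choiMap_qf x hx hH v ha0 ha1 ha2
    (entry_bound01 hx ha0 ha1) (entry_bound02 hx ha0 ha2) (entry_bound12 hx ha1 ha2))
end

section
/- The Choi map φ : M₃(ℂ) → M₃(ℂ), defined by φ((x_{ij})) = [[x₁₁ + x₃₃, −x₁₂, −x₁₃], [−x₂₁, x₁₁ + x₂₂, −x₂₃], [−x₃₁, −x₃₂, x₂₂ + x₃₃]], is not 2-positive, i.e., φ⊗ι₂ : M₃(ℂ)⊗M₂(ℂ) → M₃(ℂ)⊗M₂(ℂ) does not map positive semidefinite matrices to positive semidefinite matrices. -/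
open scoped ComplexOrder Matrix

/-- The map `φ ⊗ ι_k` on `Mₙ ⊗ M_k`, in block form. -/
def mapTensorId {n m : ℕ} (k : ℕ)
    (φ : Matrix (Fin n) (Fin n) ℂ →ₗ[ℂ] Matrix (Fin m) (Fin m) ℂ)
    (A : Matrix (Fin n × Fin k) (Fin n × Fin k) ℂ) :
    Matrix (Fin m × Fin k) (Fin m × Fin k) ℂ :=
  fun p q => φ (Matrix.of fun i j => A (i, p.2) (j, q.2)) p.1 q.1

/-- `φ` is k-positive if `φ ⊗ ι_k` maps positive semidefinite matrices to
positive semidefinite matrices. -/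
def IsKPositive {n m : ℕ} (k : ℕ)
    (φ : Matrix (Fin n) (Fin n) ℂ →ₗ[ℂ] Matrix (Fin m) (Fin m) ℂ) : Prop :=
  ∀ A : Matrix (Fin n × Fin k) (Fin n × Fin k) ℂ, A.PosSemidef → (mapTensorId k φ A).PosSemidef


noncomputable def wv : Fin 3 × Fin 2 → ℂ := fun p => if p = (2, 1) then -1 else 1

noncomputable def wA : Matrix (Fin 3 × Fin 2) (Fin 3 × Fin 2) ℂ := fun p q => wv p * wv q

lemma wA_psd : wA.PosSemidef := by
  have h : wA = (Matrix.of (fun (_ : Fin 1) q => wv q))ᴴ * Matrix.of (fun (_ : Fin 1) q => wv q) := by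
    ext p q
    simp [wA, wv, Matrix.mul_apply, Matrix.conjTranspose_apply, Fin.sum_univ_succ]
    by_cases hp : p = (2,1) <;> by_cases hq : q = (2,1) <;> simp [hp, hq] <;> ring
  rw [h]
  exact Matrix.posSemidef_conjTranspose_mul_self _

/-- The Choi map is not 2-positive. -/
theorem choiMap_not_two_positive : ¬ IsKPositive 2 choiMap := by
  intro h
  have hB := (h wA wA_psd).dotProduct_mulVec_nonneg wv
  have key : dotProduct (star wv) (Matrix.mulVec (mapTensorId 2 choiMap wA) wv) = (-8 : ℂ) := by
    simp only [mapTensorId, choiMap, wA, wv, dotProduct, Matrix.mulVec,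
      Fintype.sum_prod_type, Fin.sum_univ_succ, Fin.sum_univ_zero, LinearMap.coe_mk,
      AddHom.coe_mk, Matrix.of_apply, Pi.star_apply]
    norm_num [Matrix.cons_val_zero, Matrix.cons_val_one, Matrix.cons_val_two, Matrix.head_cons,
      Matrix.vecHead, Matrix.vecTail, Prod.ext_iff, Fin.ext_iff]
  rw [key] at hB
  simp [Complex.le_def] at hB
  norm_num at hB
end

section
/- The Choi map φ : M₃(ℂ) → M₃(ℂ), defined by φ((x_{ij})) = [[x₁₁ + x₃₃, −x₁₂, −x₁₃], [−x₂₁, x₁₁ + x₂₂, −x₂₃], [−x₃₁, −x₃₂, x₂₂ + x₃₃]], is atomic: it cannot be written as φ = φ₁ + φ₂ where φ₁ : M₃(ℂ) → M₃(ℂ) is 2-positive and φ₂ : M₃(ℂ) → M₃(ℂ) is 2-copositive. -/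
set_option maxHeartbeats 2000000


open scoped ComplexOrder Matrix

/-- The transpose map on `Mₘ(ℂ)` as a linear map. -/
def transposeMap (m : ℕ) : Matrix (Fin m) (Fin m) ℂ →ₗ[ℂ] Matrix (Fin m) (Fin m) ℂ where
  toFun x := x.transpose
  map_add' x y := Matrix.transpose_add x y
  map_smul' c x := Matrix.transpose_smul c x

section Aux
open Matrix

def EE (i j : Fin 3) : Matrix (Fin 3) (Fin 3) ℂ := Matrix.single i j 1

noncomputable def G (ψ : Matrix (Fin 3) (Fin 3) ℂ →ₗ[ℂ] Matrix (Fin 3) (Fin 3) ℂ)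
    (v : Fin 3 → Fin 3 → ℂ) : ℂ :=
  ∑ i, ∑ k, ∑ j, ∑ l, v i k * (starRingEnd ℂ) (v j l) * ψ (EE i j) k l

lemma psi_of (ψ : Matrix (Fin 3) (Fin 3) ℂ →ₗ[ℂ] Matrix (Fin 3) (Fin 3) ℂ)
    (c : Fin 3 → Fin 3 → ℂ) (k l : Fin 3) :
    ψ (Matrix.of c) k l = ∑ i, ∑ j, c i j * ψ (EE i j) k l := by
  have h : (Matrix.of c : Matrix (Fin 3) (Fin 3) ℂ) = ∑ i, ∑ j, c i j • EE i j := by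
    nth_rewrite 1 [Matrix.matrix_eq_sum_single (Matrix.of c)]
    simp [EE, Matrix.smul_single]
  rw [h]
  simp [map_sum, Matrix.sum_apply]

lemma key (ψ : Matrix (Fin 3) (Fin 3) ℂ →ₗ[ℂ] Matrix (Fin 3) (Fin 3) ℂ)
    (hψ : IsKPositive 2 ψ) (u z : Fin 3 → Fin 2 → ℂ) :
    0 ≤ G ψ (fun i k => ∑ s, u i s * (starRingEnd ℂ) (z k s)) := by
  set A : Matrix (Fin 3 × Fin 2) (Fin 3 × Fin 2) ℂ :=
    Matrix.of fun p q => u p.1 p.2 * (starRingEnd ℂ) (u q.1 q.2) with hAdef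
  have hA : A.PosSemidef := by
    refine Matrix.PosSemidef.of_dotProduct_mulVec_nonneg ?_ ?_
    · ext p q
      simp [hAdef, Matrix.conjTranspose_apply, mul_comm]
    · intro x
      have h1 : star x ⬝ᵥ A *ᵥ x
          = (∑ p, (starRingEnd ℂ) (x p) * u p.1 p.2) * (∑ q, (starRingEnd ℂ) (u q.1 q.2) * x q) := by
        rw [Finset.sum_mul_sum]
        simp only [dotProduct, Matrix.mulVec, hAdef, Matrix.of_apply, Finset.mul_sum,
          Pi.star_apply, RCLike.star_def]
        exact Finset.sum_congr rfl fun p _ => Finset.sum_congr rfl fun q _ => by ring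
      have h2 : (∑ q, (starRingEnd ℂ) (u q.1 q.2) * x q)
          = (starRingEnd ℂ) (∑ p, (starRingEnd ℂ) (x p) * u p.1 p.2) := by
        rw [map_sum]
        exact Finset.sum_congr rfl fun p _ => by simp [mul_comm]
      rw [h1, h2, Complex.mul_conj]
      exact_mod_cast Complex.normSq_nonneg _
  have hM := (hψ A hA).dotProduct_mulVec_nonneg (fun p => z p.1 p.2)
  have h3 : star (fun p : Fin 3 × Fin 2 => z p.1 p.2) ⬝ᵥ
      (mapTensorId 2 ψ A) *ᵥ (fun p => z p.1 p.2)
      = G ψ (fun i k => ∑ s, u i s * (starRingEnd ℂ) (z k s)) := by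
    simp only [dotProduct, Matrix.mulVec, mapTensorId, hAdef, Matrix.of_apply, psi_of, G,
      Pi.star_apply, RCLike.star_def, map_sum, _root_.map_mul, Complex.conj_conj,
      Fintype.sum_prod_type, Finset.mul_sum, Finset.sum_mul]
    simp only [Fin.sum_univ_succ, Fin.sum_univ_zero, add_zero]
    ring
  rwa [h3] at hM

lemma key' (ψ : Matrix (Fin 3) (Fin 3) ℂ →ₗ[ℂ] Matrix (Fin 3) (Fin 3) ℂ)
    (hψ : IsKPositive 2 ψ) (v : Fin 3 → Fin 3 → ℂ) (uu zz : Fin 3 → Fin 2 → ℂ)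
    (hv : (fun i k => ∑ s, uu i s * (starRingEnd ℂ) (zz k s)) = v) :
    0 ≤ G ψ v := by
  rw [← hv]; exact key ψ hψ uu zz

def vv1 : Fin 3 → Fin 3 → ℂ := ![![1,0,(-1)],![(-1),1,0],![0,(-1),1]]
def vu1 : Fin 3 → Fin 2 → ℂ := ![![1,0],![0,1],![(-1),(-1)]]
def vz1 : Fin 3 → Fin 2 → ℂ := ![![1,(-1)],![0,1],![(-1),0]]
def vv2 : Fin 3 → Fin 3 → ℂ := ![![1,0,1],![(-1),1,0],![0,1,1]]
def vu2 : Fin 3 → Fin 2 → ℂ := ![![1,0],![0,1],![1,1]]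
def vz2 : Fin 3 → Fin 2 → ℂ := ![![1,(-1)],![0,1],![1,0]]
def vv3 : Fin 3 → Fin 3 → ℂ := ![![1,0,1],![1,1,0],![0,(-1),1]]
def vu3 : Fin 3 → Fin 2 → ℂ := ![![1,0],![0,1],![1,(-1)]]
def vz3 : Fin 3 → Fin 2 → ℂ := ![![1,1],![0,1],![1,0]]
def vv4 : Fin 3 → Fin 3 → ℂ := ![![1,0,(-1)],![1,1,0],![0,1,1]]
def vu4 : Fin 3 → Fin 2 → ℂ := ![![1,0],![0,1],![(-1),1]]
def vz4 : Fin 3 → Fin 2 → ℂ := ![![1,1],![0,1],![(-1),0]]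
def vv5 : Fin 3 → Fin 3 → ℂ := ![![0,1,0],![0,0,0],![0,0,0]]
def vu5 : Fin 3 → Fin 2 → ℂ := ![![1,0],![0,0],![0,0]]
def vz5 : Fin 3 → Fin 2 → ℂ := ![![0,0],![1,0],![0,0]]
def vv6 : Fin 3 → Fin 3 → ℂ := ![![0,0,0],![0,0,1],![0,0,0]]
def vu6 : Fin 3 → Fin 2 → ℂ := ![![0,0],![1,0],![0,0]]
def vz6 : Fin 3 → Fin 2 → ℂ := ![![0,0],![0,0],![1,0]]
def vv7 : Fin 3 → Fin 3 → ℂ := ![![0,0,0],![0,0,0],![1,0,0]]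
def vu7 : Fin 3 → Fin 2 → ℂ := ![![0,0],![0,0],![1,0]]
def vz7 : Fin 3 → Fin 2 → ℂ := ![![1,0],![0,0],![0,0]]
def vv8 : Fin 3 → Fin 3 → ℂ := ![![0,0,0],![4,0,0],![0,0,0]]
def vu8 : Fin 3 → Fin 2 → ℂ := ![![0,0],![4,0],![0,0]]
def vz8 : Fin 3 → Fin 2 → ℂ := ![![1,0],![0,0],![0,0]]
def vv9 : Fin 3 → Fin 3 → ℂ := ![![0,0,0],![0,0,0],![0,4,0]]
def vu9 : Fin 3 → Fin 2 → ℂ := ![![0,0],![0,0],![4,0]]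
def vz9 : Fin 3 → Fin 2 → ℂ := ![![0,0],![1,0],![0,0]]
def vv10 : Fin 3 → Fin 3 → ℂ := ![![0,0,4],![0,0,0],![0,0,0]]
def vu10 : Fin 3 → Fin 2 → ℂ := ![![4,0],![0,0],![0,0]]
def vz10 : Fin 3 → Fin 2 → ℂ := ![![0,0],![0,0],![1,0]]
def ww1 : Fin 3 → Fin 3 → ℂ := ![![2,0,0],![0,0,0],![0,0,0]]
def wu1 : Fin 3 → Fin 2 → ℂ := ![![2,0],![0,0],![0,0]]
def wz1 : Fin 3 → Fin 2 → ℂ := ![![1,0],![0,0],![0,0]]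
def ww2 : Fin 3 → Fin 3 → ℂ := ![![0,0,0],![0,2,0],![0,0,0]]
def wu2 : Fin 3 → Fin 2 → ℂ := ![![0,0],![2,0],![0,0]]
def wz2 : Fin 3 → Fin 2 → ℂ := ![![0,0],![1,0],![0,0]]
def ww3 : Fin 3 → Fin 3 → ℂ := ![![0,0,0],![0,0,0],![0,0,2]]
def wu3 : Fin 3 → Fin 2 → ℂ := ![![0,0],![0,0],![2,0]]
def wz3 : Fin 3 → Fin 2 → ℂ := ![![0,0],![0,0],![1,0]]
def ww4 : Fin 3 → Fin 3 → ℂ := ![![0,1,0],![4,0,0],![0,0,0]]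
def wu4 : Fin 3 → Fin 2 → ℂ := ![![1,0],![0,4],![0,0]]
def wz4 : Fin 3 → Fin 2 → ℂ := ![![0,1],![1,0],![0,0]]
def ww5 : Fin 3 → Fin 3 → ℂ := ![![0,0,0],![2,0,0],![0,0,0]]
def wu5 : Fin 3 → Fin 2 → ℂ := ![![0,0],![2,0],![0,0]]
def wz5 : Fin 3 → Fin 2 → ℂ := ![![1,0],![0,0],![0,0]]
def ww6 : Fin 3 → Fin 3 → ℂ := ![![0,0,0],![0,0,1],![0,4,0]]
def wu6 : Fin 3 → Fin 2 → ℂ := ![![0,0],![1,0],![0,4]]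
def wz6 : Fin 3 → Fin 2 → ℂ := ![![0,0],![0,1],![1,0]]
def ww7 : Fin 3 → Fin 3 → ℂ := ![![0,0,0],![0,0,0],![0,2,0]]
def wu7 : Fin 3 → Fin 2 → ℂ := ![![0,0],![0,0],![2,0]]
def wz7 : Fin 3 → Fin 2 → ℂ := ![![0,0],![1,0],![0,0]]
def ww8 : Fin 3 → Fin 3 → ℂ := ![![0,0,4],![0,0,0],![1,0,0]]
def wu8 : Fin 3 → Fin 2 → ℂ := ![![0,4],![0,0],![1,0]]
def wz8 : Fin 3 → Fin 2 → ℂ := ![![1,0],![0,0],![0,1]]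
def ww9 : Fin 3 → Fin 3 → ℂ := ![![0,0,2],![0,0,0],![0,0,0]]
def wu9 : Fin 3 → Fin 2 → ℂ := ![![2,0],![0,0],![0,0]]
def wz9 : Fin 3 → Fin 2 → ℂ := ![![0,0],![0,0],![1,0]]

lemma transposeMap_apply (X : Matrix (Fin 3) (Fin 3) ℂ) : transposeMap 3 X = Xᵀ := rfl

lemma G_add (ψ₁ ψ₂ : Matrix (Fin 3) (Fin 3) ℂ →ₗ[ℂ] Matrix (Fin 3) (Fin 3) ℂ)
    (v : Fin 3 → Fin 3 → ℂ) : G (ψ₁ + ψ₂) v = G ψ₁ v + G ψ₂ v := by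
  simp [G, LinearMap.add_apply, Matrix.add_apply, mul_add, Finset.sum_add_distrib]

lemma master (ψ : Matrix (Fin 3) (Fin 3) ℂ →ₗ[ℂ] Matrix (Fin 3) (Fin 3) ℂ) :
    G ψ vv1 + G ψ vv2 + G ψ vv3 + G ψ vv4 + G ψ vv5 + G ψ vv6 + G ψ vv7 + G ψ vv8
      + G ψ vv9 + G ψ vv10
    = G (transposeMap 3 ∘ₗ ψ) ww1 + G (transposeMap 3 ∘ₗ ψ) ww2 + G (transposeMap 3 ∘ₗ ψ) ww3
      + G (transposeMap 3 ∘ₗ ψ) ww4 + G (transposeMap 3 ∘ₗ ψ) ww5 + G (transposeMap 3 ∘ₗ ψ) ww6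
      + G (transposeMap 3 ∘ₗ ψ) ww7 + G (transposeMap 3 ∘ₗ ψ) ww8 + G (transposeMap 3 ∘ₗ ψ) ww9 := by
  simp only [G, LinearMap.comp_apply, transposeMap_apply, Matrix.transpose_apply,
    Fin.sum_univ_succ, Fin.sum_univ_zero, add_zero,
    vv1, vv2, vv3, vv4, vv5, vv6, vv7, vv8, vv9, vv10,
    ww1, ww2, ww3, ww4, ww5, ww6, ww7, ww8, ww9,
    Matrix.cons_val_zero, Matrix.cons_val_one, Matrix.head_cons, Matrix.cons_val_succ,
    map_neg, _root_.map_one, map_zero, map_ofNat, mul_zero, zero_mul, mul_one, one_mul, neg_neg,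
    mul_neg, neg_mul, neg_zero, zero_add]
  ring

lemma value :
    G choiMap vv1 + G choiMap vv2 + G choiMap vv3 + G choiMap vv4 + G choiMap vv5
      + G choiMap vv6 + G choiMap vv7 + G choiMap vv8 + G choiMap vv9 + G choiMap vv10
    = -9 := by
  have hc : ∀ i j k l : Fin 3, choiMap (EE i j) k l =
      (!![EE i j 0 0 + EE i j 2 2, -EE i j 0 1, -EE i j 0 2;
       -EE i j 1 0, EE i j 0 0 + EE i j 1 1, -EE i j 1 2;
       -EE i j 2 0, -EE i j 2 1, EE i j 1 1 + EE i j 2 2] : Matrix (Fin 3) (Fin 3) ℂ) k l :=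
    fun i j k l => rfl
  simp only [G, Fin.sum_univ_succ, Fin.sum_univ_zero, add_zero,
    vv1, vv2, vv3, vv4, vv5, vv6, vv7, vv8, vv9, vv10,
    Matrix.cons_val_zero, Matrix.cons_val_one, Matrix.head_cons, Matrix.cons_val_succ,
    map_neg, _root_.map_one, map_zero, map_ofNat]
  simp only [hc]
  simp only [EE, Matrix.single, Matrix.of_apply,
    Matrix.cons_val_zero, Matrix.cons_val_one, Matrix.head_cons, Matrix.cons_val_succ]
  norm_num [Fin.ext_iff]

end Aux

/-- **Atomicity of the Choi map**: the Choi map is not the sum of a 2-positive map and a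
2-copositive map. -/
theorem choiMap_atomic :
    ¬ ∃ φ₁ φ₂ : Matrix (Fin 3) (Fin 3) ℂ →ₗ[ℂ] Matrix (Fin 3) (Fin 3) ℂ,
        IsKPositive 2 φ₁ ∧ IsKPositive 2 (transposeMap 3 ∘ₗ φ₂) ∧ choiMap = φ₁ + φ₂ := by
  rintro ⟨φ₁, φ₂, h₁, h₂, hsum⟩
  have k1 : 0 ≤ G φ₁ vv1 := key' φ₁ h₁ vv1 vu1 vz1 (by
    funext i k
    fin_cases i <;> fin_cases k <;>
      simp only [vu1, vz1, vv1, Fin.sum_univ_succ, Fin.sum_univ_zero, Matrix.cons_val_zero,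
        Matrix.cons_val_one, Matrix.head_cons, Matrix.cons_val_succ, map_neg, _root_.map_one,
        map_zero, map_ofNat, add_zero, mul_zero, zero_mul, mul_one, one_mul, mul_neg, neg_mul,
        neg_neg, neg_zero, zero_add] <;> norm_num)
  have k2 : 0 ≤ G φ₁ vv2 := key' φ₁ h₁ vv2 vu2 vz2 (by
    funext i k
    fin_cases i <;> fin_cases k <;>
      simp only [vu2, vz2, vv2, Fin.sum_univ_succ, Fin.sum_univ_zero, Matrix.cons_val_zero,
        Matrix.cons_val_one, Matrix.head_cons, Matrix.cons_val_succ, map_neg, _root_.map_one,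
        map_zero, map_ofNat, add_zero, mul_zero, zero_mul, mul_one, one_mul, mul_neg, neg_mul,
        neg_neg, neg_zero, zero_add] <;> norm_num)
  have k3 : 0 ≤ G φ₁ vv3 := key' φ₁ h₁ vv3 vu3 vz3 (by
    funext i k
    fin_cases i <;> fin_cases k <;>
      simp only [vu3, vz3, vv3, Fin.sum_univ_succ, Fin.sum_univ_zero, Matrix.cons_val_zero,
        Matrix.cons_val_one, Matrix.head_cons, Matrix.cons_val_succ, map_neg, _root_.map_one,
        map_zero, map_ofNat, add_zero, mul_zero, zero_mul, mul_one, one_mul, mul_neg, neg_mul,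
        neg_neg, neg_zero, zero_add] <;> norm_num)
  have k4 : 0 ≤ G φ₁ vv4 := key' φ₁ h₁ vv4 vu4 vz4 (by
    funext i k
    fin_cases i <;> fin_cases k <;>
      simp only [vu4, vz4, vv4, Fin.sum_univ_succ, Fin.sum_univ_zero, Matrix.cons_val_zero,
        Matrix.cons_val_one, Matrix.head_cons, Matrix.cons_val_succ, map_neg, _root_.map_one,
        map_zero, map_ofNat, add_zero, mul_zero, zero_mul, mul_one, one_mul, mul_neg, neg_mul,
        neg_neg, neg_zero, zero_add] <;> norm_num)
  have k5 : 0 ≤ G φ₁ vv5 := key' φ₁ h₁ vv5 vu5 vz5 (by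
    funext i k
    fin_cases i <;> fin_cases k <;>
      simp only [vu5, vz5, vv5, Fin.sum_univ_succ, Fin.sum_univ_zero, Matrix.cons_val_zero,
        Matrix.cons_val_one, Matrix.head_cons, Matrix.cons_val_succ, map_neg, _root_.map_one,
        map_zero, map_ofNat, add_zero, mul_zero, zero_mul, mul_one, one_mul, mul_neg, neg_mul,
        neg_neg, neg_zero, zero_add] <;> norm_num)
  have k6 : 0 ≤ G φ₁ vv6 := key' φ₁ h₁ vv6 vu6 vz6 (by
    funext i k
    fin_cases i <;> fin_cases k <;>
      simp only [vu6, vz6, vv6, Fin.sum_univ_succ, Fin.sum_univ_zero, Matrix.cons_val_zero,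
        Matrix.cons_val_one, Matrix.head_cons, Matrix.cons_val_succ, map_neg, _root_.map_one,
        map_zero, map_ofNat, add_zero, mul_zero, zero_mul, mul_one, one_mul, mul_neg, neg_mul,
        neg_neg, neg_zero, zero_add] <;> norm_num)
  have k7 : 0 ≤ G φ₁ vv7 := key' φ₁ h₁ vv7 vu7 vz7 (by
    funext i k
    fin_cases i <;> fin_cases k <;>
      simp only [vu7, vz7, vv7, Fin.sum_univ_succ, Fin.sum_univ_zero, Matrix.cons_val_zero,
        Matrix.cons_val_one, Matrix.head_cons, Matrix.cons_val_succ, map_neg, _root_.map_one,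
        map_zero, map_ofNat, add_zero, mul_zero, zero_mul, mul_one, one_mul, mul_neg, neg_mul,
        neg_neg, neg_zero, zero_add] <;> norm_num)
  have k8 : 0 ≤ G φ₁ vv8 := key' φ₁ h₁ vv8 vu8 vz8 (by
    funext i k
    fin_cases i <;> fin_cases k <;>
      simp only [vu8, vz8, vv8, Fin.sum_univ_succ, Fin.sum_univ_zero, Matrix.cons_val_zero,
        Matrix.cons_val_one, Matrix.head_cons, Matrix.cons_val_succ, map_neg, _root_.map_one,
        map_zero, map_ofNat, add_zero, mul_zero, zero_mul, mul_one, one_mul, mul_neg, neg_mul,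
        neg_neg, neg_zero, zero_add] <;> norm_num)
  have k9 : 0 ≤ G φ₁ vv9 := key' φ₁ h₁ vv9 vu9 vz9 (by
    funext i k
    fin_cases i <;> fin_cases k <;>
      simp only [vu9, vz9, vv9, Fin.sum_univ_succ, Fin.sum_univ_zero, Matrix.cons_val_zero,
        Matrix.cons_val_one, Matrix.head_cons, Matrix.cons_val_succ, map_neg, _root_.map_one,
        map_zero, map_ofNat, add_zero, mul_zero, zero_mul, mul_one, one_mul, mul_neg, neg_mul,
        neg_neg, neg_zero, zero_add] <;> norm_num)
  have k10 : 0 ≤ G φ₁ vv10 := key' φ₁ h₁ vv10 vu10 vz10 (by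
    funext i k
    fin_cases i <;> fin_cases k <;>
      simp only [vu10, vz10, vv10, Fin.sum_univ_succ, Fin.sum_univ_zero, Matrix.cons_val_zero,
        Matrix.cons_val_one, Matrix.head_cons, Matrix.cons_val_succ, map_neg, _root_.map_one,
        map_zero, map_ofNat, add_zero, mul_zero, zero_mul, mul_one, one_mul, mul_neg, neg_mul,
        neg_neg, neg_zero, zero_add] <;> norm_num)
  have m1 : 0 ≤ G (transposeMap 3 ∘ₗ φ₂) ww1 := key' _ h₂ ww1 wu1 wz1 (by
    funext i k
    fin_cases i <;> fin_cases k <;>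
      simp only [wu1, wz1, ww1, Fin.sum_univ_succ, Fin.sum_univ_zero, Matrix.cons_val_zero,
        Matrix.cons_val_one, Matrix.head_cons, Matrix.cons_val_succ, map_neg, _root_.map_one,
        map_zero, map_ofNat, add_zero, mul_zero, zero_mul, mul_one, one_mul, mul_neg, neg_mul,
        neg_neg, neg_zero, zero_add] <;> norm_num)
  have m2 : 0 ≤ G (transposeMap 3 ∘ₗ φ₂) ww2 := key' _ h₂ ww2 wu2 wz2 (by
    funext i k
    fin_cases i <;> fin_cases k <;>
      simp only [wu2, wz2, ww2, Fin.sum_univ_succ, Fin.sum_univ_zero, Matrix.cons_val_zero,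
        Matrix.cons_val_one, Matrix.head_cons, Matrix.cons_val_succ, map_neg, _root_.map_one,
        map_zero, map_ofNat, add_zero, mul_zero, zero_mul, mul_one, one_mul, mul_neg, neg_mul,
        neg_neg, neg_zero, zero_add] <;> norm_num)
  have m3 : 0 ≤ G (transposeMap 3 ∘ₗ φ₂) ww3 := key' _ h₂ ww3 wu3 wz3 (by
    funext i k
    fin_cases i <;> fin_cases k <;>
      simp only [wu3, wz3, ww3, Fin.sum_univ_succ, Fin.sum_univ_zero, Matrix.cons_val_zero,
        Matrix.cons_val_one, Matrix.head_cons, Matrix.cons_val_succ, map_neg, _root_.map_one,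
        map_zero, map_ofNat, add_zero, mul_zero, zero_mul, mul_one, one_mul, mul_neg, neg_mul,
        neg_neg, neg_zero, zero_add] <;> norm_num)
  have m4 : 0 ≤ G (transposeMap 3 ∘ₗ φ₂) ww4 := key' _ h₂ ww4 wu4 wz4 (by
    funext i k
    fin_cases i <;> fin_cases k <;>
      simp only [wu4, wz4, ww4, Fin.sum_univ_succ, Fin.sum_univ_zero, Matrix.cons_val_zero,
        Matrix.cons_val_one, Matrix.head_cons, Matrix.cons_val_succ, map_neg, _root_.map_one,
        map_zero, map_ofNat, add_zero, mul_zero, zero_mul, mul_one, one_mul, mul_neg, neg_mul,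
        neg_neg, neg_zero, zero_add] <;> norm_num)
  have m5 : 0 ≤ G (transposeMap 3 ∘ₗ φ₂) ww5 := key' _ h₂ ww5 wu5 wz5 (by
    funext i k
    fin_cases i <;> fin_cases k <;>
      simp only [wu5, wz5, ww5, Fin.sum_univ_succ, Fin.sum_univ_zero, Matrix.cons_val_zero,
        Matrix.cons_val_one, Matrix.head_cons, Matrix.cons_val_succ, map_neg, _root_.map_one,
        map_zero, map_ofNat, add_zero, mul_zero, zero_mul, mul_one, one_mul, mul_neg, neg_mul,
        neg_neg, neg_zero, zero_add] <;> norm_num)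
  have m6 : 0 ≤ G (transposeMap 3 ∘ₗ φ₂) ww6 := key' _ h₂ ww6 wu6 wz6 (by
    funext i k
    fin_cases i <;> fin_cases k <;>
      simp only [wu6, wz6, ww6, Fin.sum_univ_succ, Fin.sum_univ_zero, Matrix.cons_val_zero,
        Matrix.cons_val_one, Matrix.head_cons, Matrix.cons_val_succ, map_neg, _root_.map_one,
        map_zero, map_ofNat, add_zero, mul_zero, zero_mul, mul_one, one_mul, mul_neg, neg_mul,
        neg_neg, neg_zero, zero_add] <;> norm_num)
  have m7 : 0 ≤ G (transposeMap 3 ∘ₗ φ₂) ww7 := key' _ h₂ ww7 wu7 wz7 (by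
    funext i k
    fin_cases i <;> fin_cases k <;>
      simp only [wu7, wz7, ww7, Fin.sum_univ_succ, Fin.sum_univ_zero, Matrix.cons_val_zero,
        Matrix.cons_val_one, Matrix.head_cons, Matrix.cons_val_succ, map_neg, _root_.map_one,
        map_zero, map_ofNat, add_zero, mul_zero, zero_mul, mul_one, one_mul, mul_neg, neg_mul,
        neg_neg, neg_zero, zero_add] <;> norm_num)
  have m8 : 0 ≤ G (transposeMap 3 ∘ₗ φ₂) ww8 := key' _ h₂ ww8 wu8 wz8 (by
    funext i k
    fin_cases i <;> fin_cases k <;>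
      simp only [wu8, wz8, ww8, Fin.sum_univ_succ, Fin.sum_univ_zero, Matrix.cons_val_zero,
        Matrix.cons_val_one, Matrix.head_cons, Matrix.cons_val_succ, map_neg, _root_.map_one,
        map_zero, map_ofNat, add_zero, mul_zero, zero_mul, mul_one, one_mul, mul_neg, neg_mul,
        neg_neg, neg_zero, zero_add] <;> norm_num)
  have m9 : 0 ≤ G (transposeMap 3 ∘ₗ φ₂) ww9 := key' _ h₂ ww9 wu9 wz9 (by
    funext i k
    fin_cases i <;> fin_cases k <;>
      simp only [wu9, wz9, ww9, Fin.sum_univ_succ, Fin.sum_univ_zero, Matrix.cons_val_zero,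
        Matrix.cons_val_one, Matrix.head_cons, Matrix.cons_val_succ, map_neg, _root_.map_one,
        map_zero, map_ofNat, add_zero, mul_zero, zero_mul, mul_one, one_mul, mul_neg, neg_mul,
        neg_neg, neg_zero, zero_add] <;> norm_num)
  have hS1 : 0 ≤ G φ₁ vv1 + G φ₁ vv2 + G φ₁ vv3 + G φ₁ vv4 + G φ₁ vv5 + G φ₁ vv6
      + G φ₁ vv7 + G φ₁ vv8 + G φ₁ vv9 + G φ₁ vv10 := add_nonneg (add_nonneg (add_nonneg (add_nonneg (add_nonneg (add_nonneg (add_nonneg (add_nonneg (add_nonneg k1 k2) k3) k4) k5) k6) k7) k8) k9) k10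
  have hS2 : 0 ≤ G (transposeMap 3 ∘ₗ φ₂) ww1 + G (transposeMap 3 ∘ₗ φ₂) ww2
      + G (transposeMap 3 ∘ₗ φ₂) ww3 + G (transposeMap 3 ∘ₗ φ₂) ww4 + G (transposeMap 3 ∘ₗ φ₂) ww5
      + G (transposeMap 3 ∘ₗ φ₂) ww6 + G (transposeMap 3 ∘ₗ φ₂) ww7 + G (transposeMap 3 ∘ₗ φ₂) ww8
      + G (transposeMap 3 ∘ₗ φ₂) ww9 := add_nonneg (add_nonneg (add_nonneg (add_nonneg (add_nonneg (add_nonneg (add_nonneg (add_nonneg m1 m2) m3) m4) m5) m6) m7) m8) m9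
  have hval := value
  rw [hsum] at hval
  simp only [G_add] at hval
  have hm := master φ₂
  have hfinal : (0:ℂ) ≤ -9 := by
    calc (0:ℂ) ≤ (G φ₁ vv1 + G φ₁ vv2 + G φ₁ vv3 + G φ₁ vv4 + G φ₁ vv5 + G φ₁ vv6
          + G φ₁ vv7 + G φ₁ vv8 + G φ₁ vv9 + G φ₁ vv10)
          + (G (transposeMap 3 ∘ₗ φ₂) ww1 + G (transposeMap 3 ∘ₗ φ₂) ww2
          + G (transposeMap 3 ∘ₗ φ₂) ww3 + G (transposeMap 3 ∘ₗ φ₂) ww4 + G (transposeMap 3 ∘ₗ φ₂) ww5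
          + G (transposeMap 3 ∘ₗ φ₂) ww6 + G (transposeMap 3 ∘ₗ φ₂) ww7 + G (transposeMap 3 ∘ₗ φ₂) ww8
          + G (transposeMap 3 ∘ₗ φ₂) ww9) := add_nonneg hS1 hS2
      _ = -9 := by rw [← hm]; linear_combination hval
  norm_num [Complex.le_def] at hfinal
end
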